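/- For all integers n ≥ 1 and 2 ≤ k ≤ ⌊n/2⌋: Σ_{i=1}^{n-1} C(n,i)·[C(n-k-1,k)·p(n-2k-1, n-i-k-1) + C(n-k-1,k-1)·p(n-2k, n-i-k)] = C(n-k,k)·C_{n-k}, where p(a,b) := C(a,b) - C(a,b-1) and C_m is the m-th Catalan number. -/

import Mathlib

/-- The binomial coefficient `C(a,b)` for integer arguments, with the convention that
`C(a,b) = 0` unless `0 ≤ b ≤ a`. -/
def Cb (a b : ℤ) : ℚ :=
  if 0 ≤ b ∧ b ≤ a then (a.toNat.choose b.toNat : ℚ) else 0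

/-- `p(a,b) := C(a,b) - C(a,b-1)`. -/
def pB (a b : ℤ) : ℚ := Cb a b - Cb a (b - 1)

lemma Cb_natCast (a b : ℕ) : Cb (a : ℤ) (b : ℤ) = (a.choose b : ℚ) := by
  unfold Cb
  split
  · simp
  · next h =>
    have hab : a < b := by omega
    rw [Nat.choose_eq_zero_of_lt hab]
    simp

lemma Cb_neg {a b : ℤ} (h : b < 0) : Cb a b = 0 := by
  unfold Cb
  rw [if_neg (by omega)]

lemma Cb_gt {a b : ℤ} (h : a < b) : Cb a b = 0 := by
  unfold Cb
  rw [if_neg (by omega)]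

lemma vand_range (a b : ℕ) (c : ℤ) :
    ∑ i ∈ Finset.range (a + 1), Cb (a : ℤ) (i : ℤ) * Cb (b : ℤ) (c - (i : ℤ))
      = Cb ((a : ℤ) + (b : ℤ)) c := by
  rcases lt_or_ge c 0 with hc | hc
  · rw [Cb_neg hc]
    apply Finset.sum_eq_zero
    intro i _
    rw [Cb_neg (by omega : c - (i : ℤ) < 0), mul_zero]
  rcases lt_or_ge ((a : ℤ) + (b : ℤ)) c with hc2 | hc2
  · rw [Cb_gt hc2]
    apply Finset.sum_eq_zero
    intro i hi
    simp only [Finset.mem_range] at hi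
    rw [Cb_gt (by omega : (b : ℤ) < c - (i : ℤ)), mul_zero]
  obtain ⟨m, rfl⟩ : ∃ m : ℕ, c = (m : ℤ) := ⟨c.toNat, by omega⟩
  have hm : m ≤ a + b := by exact_mod_cast hc2
  have key : ∀ i : ℕ, Cb (a : ℤ) (i : ℤ) * Cb (b : ℤ) ((m : ℤ) - (i : ℤ))
      = (a.choose i : ℚ) * (if i ≤ m then (b.choose (m - i) : ℚ) else 0) := by
    intro i
    rw [Cb_natCast]
    congr 1
    split
    · next h =>
      rw [show (m : ℤ) - (i : ℤ) = ((m - i : ℕ) : ℤ) by omega, Cb_natCast]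
    · next h => exact Cb_neg (by omega)
  simp only [key]
  rw [show ((a : ℤ) + (b : ℤ)) = ((a + b : ℕ) : ℤ) by push_cast; ring, Cb_natCast]
  rw [Nat.add_choose_eq, Finset.Nat.sum_antidiagonal_eq_sum_range_succ_mk]
  push_cast
  have h1 : ∑ i ∈ Finset.range (a + 1),
        ((a.choose i : ℚ) * (if i ≤ m then (b.choose (m - i) : ℚ) else 0))
      = ∑ i ∈ Finset.range (a + m + 1),
        ((a.choose i : ℚ) * (if i ≤ m then (b.choose (m - i) : ℚ) else 0)) := by
    apply Finset.sum_subset (Finset.range_subset_range.mpr (by omega))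
    intro x hx hx'
    simp only [Finset.mem_range] at hx'
    rw [Nat.choose_eq_zero_of_lt (by omega : a < x)]
    norm_num
  have h2 : ∑ i ∈ Finset.range (m + 1), ((a.choose i : ℚ) * (b.choose (m - i) : ℚ))
      = ∑ i ∈ Finset.range (a + m + 1),
        ((a.choose i : ℚ) * (if i ≤ m then (b.choose (m - i) : ℚ) else 0)) := by
    have hcong : ∑ i ∈ Finset.range (m + 1), ((a.choose i : ℚ) * (b.choose (m - i) : ℚ))
        = ∑ i ∈ Finset.range (m + 1),
          ((a.choose i : ℚ) * (if i ≤ m then (b.choose (m - i) : ℚ) else 0)) := by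
      apply Finset.sum_congr rfl
      intro i hi
      simp only [Finset.mem_range] at hi
      rw [if_pos (by omega)]
    rw [hcong]
    apply Finset.sum_subset (Finset.range_subset_range.mpr (by omega))
    intro x hx hx'
    simp only [Finset.mem_range] at hx'
    rw [if_neg (by omega), mul_zero]
  rw [h1, ← h2]

lemma vand (a b : ℕ) (c : ℤ) :
    ∑ i ∈ Finset.Icc (0 : ℤ) (a : ℤ), Cb (a : ℤ) i * Cb (b : ℤ) (c - i)
      = Cb ((a : ℤ) + (b : ℤ)) c := by
  have hIcc : Finset.Icc (0 : ℤ) (a : ℤ)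
      = (Finset.range (a + 1)).map ⟨Nat.cast, Nat.cast_injective⟩ := by
    ext x
    simp only [Finset.mem_Icc, Finset.mem_map, Finset.mem_range,
      Function.Embedding.coeFn_mk]
    constructor
    · rintro ⟨h0, h1⟩
      exact ⟨x.toNat, by omega, by omega⟩
    · rintro ⟨j, hj, rfl⟩
      omega
  rw [hIcc, Finset.sum_map]
  simp only [Function.Embedding.coeFn_mk]
  exact vand_range a b c

lemma vand_p (N b : ℕ) (c : ℤ) :
    ∑ i ∈ Finset.Icc (0 : ℤ) (N : ℤ), Cb (N : ℤ) i * pB (b : ℤ) (c - i)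
      = pB ((N : ℤ) + (b : ℤ)) c := by
  unfold pB
  have h : ∀ i ∈ Finset.Icc (0 : ℤ) (N : ℤ),
      Cb (N : ℤ) i * (Cb (b : ℤ) (c - i) - Cb (b : ℤ) (c - i - 1))
        = Cb (N : ℤ) i * Cb (b : ℤ) (c - i) - Cb (N : ℤ) i * Cb (b : ℤ) ((c - 1) - i) := by
    intro i _
    rw [show c - i - 1 = (c - 1) - i by ring]
    ring
  rw [Finset.sum_congr rfl h, Finset.sum_sub_distrib, vand, vand]

lemma cat1 (m : ℕ) (hm : 1 ≤ m) :
    ((2 * m).choose m : ℚ) - ((2 * m).choose (m - 1) : ℚ) = (catalan m : ℚ) := by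
  obtain ⟨j, rfl⟩ : ∃ j : ℕ, m = j + 1 := ⟨m - 1, by omega⟩
  have h1 := Nat.choose_succ_right_eq (2 * (j + 1)) j
  rw [show 2 * (j + 1) - j = j + 2 by omega] at h1
  have h2 := succ_mul_catalan_eq_centralBinom (j + 1)
  rw [Nat.centralBinom_eq_two_mul_choose] at h2
  have h1' : ((2 * (j + 1)).choose (j + 1) : ℚ) * ((j : ℚ) + 1)
      = ((2 * (j + 1)).choose j : ℚ) * ((j : ℚ) + 2) := by exact_mod_cast h1
  have h2' : ((j : ℚ) + 2) * (catalan (j + 1) : ℚ) = ((2 * (j + 1)).choose (j + 1) : ℚ) := by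
    exact_mod_cast h2
  rw [show j + 1 - 1 = j by omega]
  have h3 : ((j : ℚ) + 2) * (((2 * (j + 1)).choose (j + 1) : ℚ) - ((2 * (j + 1)).choose j : ℚ))
      = ((j : ℚ) + 2) * (catalan (j + 1) : ℚ) := by linear_combination h1' - h2'
  have h4 := mul_left_cancel₀ (show ((j : ℚ) + 2) ≠ 0 by positivity) h3
  linarith

lemma cat2 (m : ℕ) (hm : 2 ≤ m) :
    ((2 * m - 1).choose (m - 1) : ℚ) - ((2 * m - 1).choose (m - 2) : ℚ) = (catalan m : ℚ) := by
  obtain ⟨j, rfl⟩ : ∃ j : ℕ, m = j + 2 := ⟨m - 2, by omega⟩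
  have hc := cat1 (j + 2) (by omega)
  rw [show j + 2 - 1 = j + 1 by omega] at hc
  rw [show 2 * (j + 2) - 1 = 2 * j + 3 by omega, show j + 2 - 1 = j + 1 by omega,
    show j + 2 - 2 = j by omega]
  have p1 : (2 * (j + 2)).choose (j + 2)
      = (2 * j + 3).choose (j + 1) + (2 * j + 3).choose (j + 2) := by
    rw [show 2 * (j + 2) = (2 * j + 3) + 1 by omega]
    exact Nat.choose_succ_succ' (2 * j + 3) (j + 1)
  have p2 : (2 * (j + 2)).choose (j + 1)
      = (2 * j + 3).choose j + (2 * j + 3).choose (j + 1) := by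
    rw [show 2 * (j + 2) = (2 * j + 3) + 1 by omega]
    exact Nat.choose_succ_succ' (2 * j + 3) j
  have sym : (2 * j + 3).choose (j + 2) = (2 * j + 3).choose (j + 1) := by
    have h := Nat.choose_symm (show j + 1 ≤ 2 * j + 3 by omega)
    rwa [show 2 * j + 3 - (j + 1) = j + 2 by omega] at h
  rw [p1, p2, sym] at hc
  push_cast at hc ⊢
  linarith

/-- For `n ≥ 1` and `2 ≤ k ≤ ⌊n/2⌋`:
`Σ_{i=1}^{n-1} C(n,i)[C(n-k-1,k) p(n-2k-1, n-i-k-1) + C(n-k-1,k-1) p(n-2k, n-i-k)]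
  = C(n-k,k) C_{n-k}`, where `C_m` is the `m`-th Catalan number. -/
theorem stmt12 (n k : ℤ) (hn : 1 ≤ n) (hk2 : 2 ≤ k) (hk : k ≤ n / 2) :
    ∑ i ∈ Finset.Icc 1 (n - 1),
        Cb n i * (Cb (n - k - 1) k * pB (n - 2 * k - 1) (n - i - k - 1)
          + Cb (n - k - 1) (k - 1) * pB (n - 2 * k) (n - i - k))
      = Cb (n - k) k * (catalan (n - k).toNat : ℚ) := by
  obtain ⟨N, rfl⟩ : ∃ N : ℕ, n = (N : ℤ) := ⟨n.toNat, by omega⟩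
  obtain ⟨K, rfl⟩ : ∃ K : ℕ, k = (K : ℤ) := ⟨k.toNat, by omega⟩
  have hK2 : 2 ≤ K := by exact_mod_cast hk2
  have hNK : 2 * K ≤ N := by omega
  -- extend the sum to Icc 0 N
  have hext := Finset.sum_subset
    (f := fun i : ℤ => Cb (N : ℤ) i *
      (Cb ((N : ℤ) - K - 1) K * pB ((N : ℤ) - 2 * K - 1) ((N : ℤ) - i - K - 1)
        + Cb ((N : ℤ) - K - 1) ((K : ℤ) - 1) * pB ((N : ℤ) - 2 * K) ((N : ℤ) - i - K)))
    (show Finset.Icc (1 : ℤ) ((N : ℤ) - 1) ⊆ Finset.Icc 0 (N : ℤ) by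
      intro x hx
      simp only [Finset.mem_Icc] at *
      omega)
    (by
      intro x hx hx'
      simp only [Finset.mem_Icc] at hx hx'
      have hx0 : x = 0 ∨ x = (N : ℤ) := by omega
      beta_reduce
      rcases hx0 with rfl | rfl
      · unfold pB
        rw [Cb_gt (by omega : (N : ℤ) - 2 * K - 1 < (N : ℤ) - 0 - K - 1),
            Cb_gt (by omega : (N : ℤ) - 2 * K - 1 < (N : ℤ) - 0 - K - 1 - 1),
            Cb_gt (by omega : (N : ℤ) - 2 * K < (N : ℤ) - 0 - K),
            Cb_gt (by omega : (N : ℤ) - 2 * K < (N : ℤ) - 0 - K - 1)]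
        ring
      · unfold pB
        rw [Cb_neg (by omega : (N : ℤ) - N - K - 1 < 0),
            Cb_neg (by omega : (N : ℤ) - N - K - 1 - 1 < 0),
            Cb_neg (by omega : (N : ℤ) - N - K < 0),
            Cb_neg (by omega : (N : ℤ) - N - K - 1 < 0)]
        ring)
  rw [hext]
  -- normalize arguments
  have harg2 : ∀ i : ℤ, (N : ℤ) - i - K = ((N : ℤ) - K) - i := fun i => by ring
  have harg3 : ∀ i : ℤ, ((N : ℤ) - K) - i - 1 = ((N : ℤ) - K - 1) - i := fun i => by ring
  simp only [harg2, harg3]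
  -- split the sum
  have hsplit : ∑ i ∈ Finset.Icc (0 : ℤ) (N : ℤ), Cb (N : ℤ) i *
      (Cb ((N : ℤ) - K - 1) K * pB ((N : ℤ) - 2 * K - 1) (((N : ℤ) - K - 1) - i)
        + Cb ((N : ℤ) - K - 1) ((K : ℤ) - 1) * pB ((N : ℤ) - 2 * K) (((N : ℤ) - K) - i))
      = Cb ((N : ℤ) - K - 1) K *
          (∑ i ∈ Finset.Icc (0 : ℤ) (N : ℤ),
            Cb (N : ℤ) i * pB ((N : ℤ) - 2 * K - 1) (((N : ℤ) - K - 1) - i))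
        + Cb ((N : ℤ) - K - 1) ((K : ℤ) - 1) *
          (∑ i ∈ Finset.Icc (0 : ℤ) (N : ℤ),
            Cb (N : ℤ) i * pB ((N : ℤ) - 2 * K) (((N : ℤ) - K) - i)) := by
    rw [Finset.mul_sum, Finset.mul_sum, ← Finset.sum_add_distrib]
    exact Finset.sum_congr rfl fun i _ => by ring
  rw [hsplit]
  rw [show ((N : ℤ) - K).toNat = N - K by omega]
  rcases eq_or_lt_of_le hNK with hEq | hLt
  · -- N = 2K
    rw [Cb_gt (show (N : ℤ) - K - 1 < (K : ℤ) by omega), zero_mul, zero_add,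
        show (N : ℤ) - 2 * K = ((0 : ℕ) : ℤ) by omega, vand_p]
    unfold pB
    rw [show (N : ℤ) + ((0 : ℕ) : ℤ) = ((2 * (N - K) : ℕ) : ℤ) by omega,
        show (K : ℤ) - 1 = ((K - 1 : ℕ) : ℤ) by omega,
        show (N : ℤ) - K - 1 = ((K - 1 : ℕ) : ℤ) by omega,
        show (N : ℤ) - K = ((N - K : ℕ) : ℤ) by omega]
    simp only [Cb_natCast]
    rw [show (2 * (N - K)).choose (K - 1) = (2 * (N - K)).choose (N - K - 1) from by
          rw [show K - 1 = N - K - 1 by omega]]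
    rw [cat1 (N - K) (by omega)]
    rw [show (N - K).choose K = 1 by rw [show N - K = K by omega]; exact Nat.choose_self K,
        Nat.choose_self]
  · -- 2K < N
    rw [show (N : ℤ) - 2 * K - 1 = ((N - 2 * K - 1 : ℕ) : ℤ) by omega,
        show (N : ℤ) - 2 * K = ((N - 2 * K : ℕ) : ℤ) by omega, vand_p, vand_p]
    unfold pB
    rw [show (N : ℤ) + ((N - 2 * K - 1 : ℕ) : ℤ) = ((2 * (N - K) - 1 : ℕ) : ℤ) by omega,
        show (N : ℤ) + ((N - 2 * K : ℕ) : ℤ) = ((2 * (N - K) : ℕ) : ℤ) by omega,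
        show (N : ℤ) - K - 1 - 1 = ((N - K - 2 : ℕ) : ℤ) by omega,
        show (N : ℤ) - K - 1 = ((N - K - 1 : ℕ) : ℤ) by omega,
        show (N : ℤ) - K = ((N - K : ℕ) : ℤ) by omega,
        show (K : ℤ) - 1 = ((K - 1 : ℕ) : ℤ) by omega]
    simp only [Cb_natCast]
    rw [cat1 (N - K) (by omega), cat2 (N - K) (by omega)]
    have pasc : (N - K).choose K = (N - K - 1).choose (K - 1) + (N - K - 1).choose K := by
      obtain ⟨j, hj⟩ : ∃ j, K = j + 1 := ⟨K - 1, by omega⟩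
      obtain ⟨M, hMe⟩ : ∃ M, N - K = M + 1 := ⟨N - K - 1, by omega⟩
      rw [hMe, hj, Nat.add_sub_cancel, Nat.add_sub_cancel]
      exact Nat.choose_succ_succ' M j
    rw [pasc]
    push_cast
    ring
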